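/- Let t₀ ∈ ℝ, T_p > 0, r a positive integer, 𝒯(t) = (T_p/(T_p + t₀ − t))^r on [t₀, t₀ + T_p), and ρ > 0. Suppose x : [t₀, t₀ + T_p) → ℝ is differentiable and satisfies ẋ(t) = −ρ 𝒯(t) x(t) for all t ∈ [t₀, t₀ + T_p). Then x(t) = x(t₀) · exp(−ρ ∫_{t₀}^{t} 𝒯(τ) dτ) for all t ∈ [t₀, t₀ + T_p), and consequently x(t) → 0 as t → (t₀ + T_p)⁻. -/

import Mathlib

open Set Filter Real intervalIntegral

/-- The time-scaling function `𝒯(t) = (T_p / (T_p + t₀ - t))^r`. -/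
noncomputable def Tscale (t₀ Tp : ℝ) (r : ℕ) (t : ℝ) : ℝ := (Tp / (Tp + t₀ - t)) ^ r

section aux
variable (t₀ Tp : ℝ) (r : ℕ)

lemma Tscale_meas : Measurable (Tscale t₀ Tp r) :=
  ((measurable_const.div ((measurable_const.sub measurable_id))).pow_const r)

lemma Tscale_contAt {s : ℝ} (hs : Tp + t₀ - s ≠ 0) : ContinuousAt (Tscale t₀ Tp r) s := by
  unfold Tscale
  exact (continuousAt_const.div (by fun_prop) hs).pow r

lemma Tscale_integrable (hTp : 0 < Tp) {s : ℝ} (hs : s ∈ Set.Ico t₀ (t₀ + Tp)) :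
    IntervalIntegrable (Tscale t₀ Tp r) MeasureTheory.volume t₀ s := by
  apply ContinuousOn.intervalIntegrable
  intro τ hτ
  rw [Set.uIcc_of_le hs.1] at hτ
  exact (Tscale_contAt t₀ Tp r (by cases hτ; cases hs; linarith)).continuousWithinAt

lemma Tscale_hasDeriv (hTp : 0 < Tp) {s : ℝ} (hs : s ∈ Set.Ico t₀ (t₀ + Tp)) :
    HasDerivAt (fun u => ∫ τ in t₀..u, Tscale t₀ Tp r τ) (Tscale t₀ Tp r s) s := by
  apply intervalIntegral.integral_hasDerivAt_right (Tscale_integrable t₀ Tp r hTp hs)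
  · exact ((Tscale_meas t₀ Tp r).stronglyMeasurable).stronglyMeasurableAtFilter
  · exact Tscale_contAt t₀ Tp r (by cases hs; linarith)

end aux

/-- prescribed-time regulation of the single integrator
`ẋ = -ρ 𝒯(t) x`: `x(t) = x(t₀) exp(-ρ∫𝒯)` and `x(t) → 0` as `t → (t₀+T_p)⁻`. -/
theorem single_integrator_prescribed_time
    (t₀ Tp : ℝ) (hTp : 0 < Tp) (r : ℕ) (hr : 0 < r)
    (ρ : ℝ) (hρ : 0 < ρ)
    (x : ℝ → ℝ)
    (hx : ∀ t ∈ Set.Ico t₀ (t₀ + Tp),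
      HasDerivAt x (-(ρ * Tscale t₀ Tp r t) * x t) t) :
    (∀ t ∈ Set.Ico t₀ (t₀ + Tp),
      x t = x t₀ * Real.exp (-ρ * ∫ τ in t₀..t, Tscale t₀ Tp r τ)) ∧
    Filter.Tendsto x (nhdsWithin (t₀ + Tp) (Set.Iio (t₀ + Tp))) (nhds 0) := by
  set g : ℝ → ℝ := fun u => ∫ τ in t₀..u, Tscale t₀ Tp r τ with hg
  -- F is constant
  have hF : ∀ s ∈ Set.Ico t₀ (t₀ + Tp),
      HasDerivAt (fun u => x u * Real.exp (ρ * g u)) 0 s := by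
    intro s hs
    have h1 := hx s hs
    have h2 : HasDerivAt (fun u => Real.exp (ρ * g u))
        (Real.exp (ρ * g s) * (ρ * Tscale t₀ Tp r s)) s := by
      have := ((Tscale_hasDeriv t₀ Tp r hTp hs).const_mul ρ).exp
      simpa [mul_comm] using this
    have := h1.mul h2
    exact this.congr_deriv (by ring)
  have key : ∀ t ∈ Set.Ico t₀ (t₀ + Tp),
      x t = x t₀ * Real.exp (-ρ * g t) := by
    intro t ht
    have hsub : Set.Icc t₀ t ⊆ Set.Ico t₀ (t₀ + Tp) := fun s hs =>
      ⟨hs.1, lt_of_le_of_lt hs.2 ht.2⟩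
    have hconst := constant_of_has_deriv_right_zero
      (f := fun u => x u * Real.exp (ρ * g u)) (a := t₀) (b := t)
      (fun s hs => ((hF s (hsub hs)).differentiableAt.continuousAt).continuousWithinAt)
      (fun s hs => (hF s (hsub (Set.mem_Icc_of_Ico hs))).hasDerivWithinAt)
    have := hconst t ⟨ht.1, le_refl t⟩
    have hg0 : g t₀ = 0 := intervalIntegral.integral_same
    simp only [hg0, mul_zero, Real.exp_zero, mul_one] at this
    rw [neg_mul, Real.exp_neg, ← this]
    field_simp
  refine ⟨key, ?_⟩
  -- lower bound for g
  have hmem : Set.Ioo t₀ (t₀ + Tp) ∈ nhdsWithin (t₀ + Tp) (Set.Iio (t₀ + Tp)) :=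
    Ioo_mem_nhdsLT_of_mem ⟨by linarith, le_refl _⟩
  have hlow : ∀ t ∈ Set.Ico t₀ (t₀ + Tp),
      Tp * (Real.log Tp - Real.log (Tp + t₀ - t)) ≤ g t := by
    intro t ht
    have hint1 : ∫ τ in t₀..t, Tp / (Tp + t₀ - τ)
        = Tp * (Real.log Tp - Real.log (Tp + t₀ - t)) := by
      have hderiv : ∀ τ ∈ Set.uIcc t₀ t,
          HasDerivAt (fun u => -(Tp * Real.log (Tp + t₀ - u))) (Tp / (Tp + t₀ - τ)) τ := by
        intro τ hτ
        rw [Set.uIcc_of_le ht.1] at hτ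
        have hpos : 0 < Tp + t₀ - τ := by cases hτ; cases ht; linarith
        have hinner : HasDerivAt (fun u : ℝ => Tp + t₀ - u) (-1) τ := by
          simpa using (hasDerivAt_id τ).const_sub (Tp + t₀)
        have hlog := (hinner.log hpos.ne')
        have := (hlog.const_mul Tp).neg
        exact this.congr_deriv (by ring)
      have hcont : ContinuousOn (fun τ => Tp / (Tp + t₀ - τ)) (Set.uIcc t₀ t) := by
        intro τ hτ
        rw [Set.uIcc_of_le ht.1] at hτ
        have hpos : 0 < Tp + t₀ - τ := by cases hτ; cases ht; linarith
        exact (continuousAt_const.div (by fun_prop) hpos.ne').continuousWithinAt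
      rw [intervalIntegral.integral_eq_sub_of_hasDerivAt hderiv
        (hcont.intervalIntegrable)]
      ring
    rw [← hint1]
    apply intervalIntegral.integral_mono_on ht.1
    · apply ContinuousOn.intervalIntegrable
      rw [Set.uIcc_of_le ht.1]
      intro τ hτ
      have hpos : 0 < Tp + t₀ - τ := by cases hτ; cases ht; linarith
      exact (continuousAt_const.div (by fun_prop) hpos.ne').continuousWithinAt
    · exact Tscale_integrable t₀ Tp r hTp ht
    · intro τ hτ
      have hpos : 0 < Tp + t₀ - τ := by cases hτ; cases ht; linarith
      have h1 : 1 ≤ Tp / (Tp + t₀ - τ) := by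
        rw [le_div_iff₀ hpos]; cases hτ; cases ht; linarith
      calc Tp / (Tp + t₀ - τ) ≤ (Tp / (Tp + t₀ - τ)) ^ r := le_self_pow₀ h1 hr.ne'
        _ = Tscale t₀ Tp r τ := rfl
  -- g tends to atTop
  have hgtop : Filter.Tendsto g (nhdsWithin (t₀ + Tp) (Set.Iio (t₀ + Tp))) Filter.atTop := by
    refine Filter.tendsto_atTop_mono' _ (f₁ := fun t => Tp * (Real.log Tp - Real.log (Tp + t₀ - t))) ?_ ?_
    · filter_upwards [hmem] with t ht
      exact hlow t ⟨ht.1.le, ht.2⟩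
    · have h1 : Filter.Tendsto (fun t => Tp + t₀ - t)
          (nhdsWithin (t₀ + Tp) (Set.Iio (t₀ + Tp))) (nhdsWithin 0 (Set.Ioi 0)) := by
        apply Filter.Tendsto.inf
        · have hc : Continuous (fun t : ℝ => Tp + t₀ - t) := by fun_prop
          have h := hc.tendsto (t₀ + Tp)
          have h0 : Tp + t₀ - (t₀ + Tp) = (0:ℝ) := by ring
          rwa [h0] at h
        · rw [Filter.tendsto_principal]
          filter_upwards [Filter.mem_principal_self _] with t ht
          simp only [Set.mem_Iio] at ht; simp only [Set.mem_Ioi]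
          linarith
      have h2 := Real.tendsto_log_nhdsGT_zero.comp h1
      have h3 := Filter.tendsto_atTop_add_const_left _ (Real.log Tp)
        (Filter.tendsto_neg_atBot_atTop.comp h2)
      have h3' : Filter.Tendsto (fun t => Real.log Tp - Real.log (Tp + t₀ - t))
          (nhdsWithin (t₀ + Tp) (Set.Iio (t₀ + Tp))) Filter.atTop := by
        apply h3.congr
        intro t
        simp [Function.comp, sub_eq_add_neg]
      exact Filter.Tendsto.const_mul_atTop hTp h3'
  -- conclude
  have hexp : Filter.Tendsto (fun t => x t₀ * Real.exp (-ρ * g t))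
      (nhdsWithin (t₀ + Tp) (Set.Iio (t₀ + Tp))) (nhds 0) := by
    have h1 : Filter.Tendsto (fun t => -ρ * g t)
        (nhdsWithin (t₀ + Tp) (Set.Iio (t₀ + Tp))) Filter.atBot := by
      exact Filter.Tendsto.const_mul_atTop_of_neg (by linarith) hgtop
    have h2 := Real.tendsto_exp_atBot.comp h1
    have := h2.const_mul (x t₀)
    simpa using this
  apply hexp.congr'
  filter_upwards [hmem] with t ht
  exact (key t ⟨ht.1.le, ht.2⟩).symm
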